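/- Let K be a field, b ≥ 1 an integer, ζ ∈ K a primitive b-th root of unity, and M an n × n matrix over K. Then the following identity holds in the polynomial ring K[s]: ∏_{j=0}^{b−1} det(I − ζ^j · s · M) = det(I − s^b · M^b), where I is the n × n identity matrix and det is taken of matrices over K[s]. -/

import Mathlib

open Polynomial

theorem stmt9 {K : Type*} [Field K] (b : ℕ) (hb : 1 ≤ b) (ζ : K)
    (hζ1 : ζ ^ b = 1) (hζ2 : ∀ j : ℕ, 0 < j → j < b → ζ ^ j ≠ 1)
    (n : ℕ) (M : Matrix (Fin n) (Fin n) K) :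
    ∏ j ∈ Finset.range b,
      Matrix.det ((1 : Matrix (Fin n) (Fin n) (Polynomial K)) -
        (Polynomial.C (ζ ^ j) * Polynomial.X) • M.map Polynomial.C) =
    Matrix.det ((1 : Matrix (Fin n) (Fin n) (Polynomial K)) -
      (Polynomial.X ^ b : Polynomial K) • (M ^ b).map Polynomial.C) := by
  have hb0 : 0 < b := hb
  haveI : NeZero b := ⟨hb0.ne'⟩
  have hprim : IsPrimitiveRoot ζ b := IsPrimitiveRoot.mk_of_lt ζ hb0 hζ1 hζ2
  have hCprim : IsPrimitiveRoot (Polynomial.C ζ : Polynomial K) b :=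
    hprim.map_of_injective (Polynomial.C_injective)
  -- key polynomial identity in K[X]
  have hpoly : (1 : Polynomial K) - Polynomial.X ^ b =
      ∏ j ∈ Finset.range b, (1 - Polynomial.C (ζ ^ j) * Polynomial.X) := by
    have h1 := hCprim.pow_sub_pow_eq_prod_sub_mul (1 : Polynomial K) Polynomial.X hb0
    rw [one_pow] at h1
    rw [h1]
    refine (Finset.prod_bij (fun j _ => (Polynomial.C ζ) ^ j) ?_ ?_ ?_ ?_).symm
    · intro j _
      exact (Polynomial.mem_nthRootsFinset hb0 _).2
        (by rw [← pow_mul, mul_comm, pow_mul, hCprim.pow_eq_one, one_pow])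
    · intro i hi j hj h
      exact hCprim.pow_inj (Finset.mem_range.mp hi) (Finset.mem_range.mp hj) h
    · intro μ hμ
      obtain ⟨i, hi, hiμ⟩ := hCprim.eq_pow_of_pow_eq_one ((Polynomial.mem_nthRootsFinset hb0 _).1 hμ)
      exact ⟨i, Finset.mem_range.mpr hi, hiμ⟩
    · intro j _
      rw [map_pow]
  set A : Matrix (Fin n) (Fin n) (Polynomial K) := (Polynomial.X : Polynomial K) • M.map Polynomial.C with hA
  have hfac : ∀ j : ℕ, Polynomial.aeval A (1 - Polynomial.C (ζ ^ j) * Polynomial.X) =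
      1 - (Polynomial.C (ζ ^ j) * Polynomial.X) • M.map Polynomial.C := by
    intro j
    rw [map_sub, map_one, map_mul, Polynomial.aeval_C, Polynomial.aeval_X,
      ← Algebra.smul_def, hA, ← smul_assoc, Polynomial.smul_eq_C_mul]
  have hpow : A ^ b = (Polynomial.X ^ b : Polynomial K) • (M ^ b).map Polynomial.C := by
    rw [hA, _root_.smul_pow]
    congr 1
    exact (map_pow (Polynomial.C.mapMatrix : Matrix (Fin n) (Fin n) K →+* _) M b).symm
  have hgen : ∀ (s : Finset ℕ) (f : ℕ → Polynomial K),
      Matrix.det (Polynomial.aeval A (∏ j ∈ s, f j)) =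
        ∏ j ∈ s, Matrix.det (Polynomial.aeval A (f j)) := by
    intro s f
    induction s using Finset.induction with
    | empty => simp
    | insert _ _ h ih => rw [Finset.prod_insert h, Finset.prod_insert h, map_mul, Matrix.det_mul, ih]
  calc ∏ j ∈ Finset.range b,
      Matrix.det ((1 : Matrix (Fin n) (Fin n) (Polynomial K)) -
        (Polynomial.C (ζ ^ j) * Polynomial.X) • M.map Polynomial.C)
      = ∏ j ∈ Finset.range b,
        Matrix.det (Polynomial.aeval A (1 - Polynomial.C (ζ ^ j) * Polynomial.X)) :=
      Finset.prod_congr rfl fun j _ => (congrArg Matrix.det (hfac j)).symm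
    _ = Matrix.det (Polynomial.aeval A
        (∏ j ∈ Finset.range b, (1 - Polynomial.C (ζ ^ j) * Polynomial.X))) := (hgen _ _).symm
    _ = Matrix.det (Polynomial.aeval A ((1 : Polynomial K) - Polynomial.X ^ b)) := by
        rw [← hpoly]
    _ = Matrix.det ((1 : Matrix (Fin n) (Fin n) (Polynomial K)) - A ^ b) := by
        rw [map_sub, map_one, map_pow, Polynomial.aeval_X]
    _ = _ := by rw [hpow]
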